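/- arXiv:1510.03705 — 3 statements merged into one kernel-verified Lean document; each statement's English description precedes it below -/
import Mathlib

section
/- For a TU game with indirect function π, a pre-imputation x satisfies h(x) = 0, where h(x) = sum over pairs i<j of (π(x^{i,j,δ}) - π(x^{j,i,δ}))^2 + (sum_k x_k - v(N))^2 for sufficiently large δ, if and only if x belongs to the pre-kernel of the game. Hence the set of global minima of h over the pre-imputation set equals the pre-kernel. -/
open scoped BigOperators

noncomputable section

/-- Excess of coalition `S` at payoff vector `x` in the game `v`. -/
def excess {n : ℕ} (v : Finset (Fin n) → ℝ) (S : Finset (Fin n)) (x : Fin n → ℝ) : ℝ :=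
  v S - ∑ k ∈ S, x k

/-- The indirect function `π(x) = max_{S ⊆ N} (v(S) - x(S))`. -/
def indirect {n : ℕ} (v : Finset (Fin n) → ℝ) (x : Fin n → ℝ) : ℝ :=
  (Finset.univ : Finset (Finset (Fin n))).sup' ⟨∅, Finset.mem_univ ∅⟩ (fun S => excess v S x)

/-- The payoff vector obtained from `x` by transferring `δ` from player `i` to player `j`. -/
def transfer {n : ℕ} (x : Fin n → ℝ) (i j : Fin n) (δ : ℝ) : Fin n → ℝ :=
  fun k => if k = i then x i - δ else if k = j then x j + δ else x k

/-- Maximum surplus of player `i` over player `j` at `x`. -/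
def maxSurplus {n : ℕ} (v : Finset (Fin n) → ℝ) (i j : Fin n) (x : Fin n → ℝ) : ℝ :=
  sSup {e | ∃ S : Finset (Fin n), i ∈ S ∧ j ∉ S ∧ e = excess v S x}

/-- The critical bound `δ₁(x,v)`. -/
def delta1 {n : ℕ} (x : Fin n → ℝ) (v : Finset (Fin n) → ℝ) : ℝ :=
  sSup {e | ∃ (k : Fin n) (S : Finset (Fin n)), k ∉ S ∧ e = |v (insert k S) - v S - x k|}

/-- The objective function `h`. -/
def hFun {n : ℕ} (v : Finset (Fin n) → ℝ) (δ : ℝ) (x : Fin n → ℝ) : ℝ :=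
  (∑ p ∈ Finset.univ.filter (fun p : Fin n × Fin n => p.1 < p.2),
    (indirect v (transfer x p.1 p.2 δ) - indirect v (transfer x p.2 p.1 δ)) ^ 2)
  + (∑ k, x k - v Finset.univ) ^ 2

/-- The pre-kernel of the game `v`. -/
def preKernel {n : ℕ} (v : Finset (Fin n) → ℝ) : Set (Fin n → ℝ) :=
  {x | (∑ k, x k = v Finset.univ) ∧
    ∀ i j : Fin n, i ≠ j → maxSurplus v i j x = maxSurplus v j i x}

namespace PKaux

variable {n : ℕ} (v : Finset (Fin n) → ℝ) (x : Fin n → ℝ)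

lemma ESet_finite (i j : Fin n) :
    {e | ∃ S : Finset (Fin n), i ∈ S ∧ j ∉ S ∧ e = excess v S x}.Finite :=
  Set.Finite.subset (Set.finite_range (fun S => excess v S x))
    (by rintro e ⟨S, _, _, rfl⟩; exact ⟨S, rfl⟩)

lemma ESet_nonempty {i j : Fin n} (h : i ≠ j) :
    {e | ∃ S : Finset (Fin n), i ∈ S ∧ j ∉ S ∧ e = excess v S x}.Nonempty :=
  ⟨excess v {i} x, {i}, Finset.mem_singleton_self i, by simp [h.symm], rfl⟩

lemma excess_le_maxSurplus {i j : Fin n} {S : Finset (Fin n)} (hi : i ∈ S) (hj : j ∉ S) :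
    excess v S x ≤ maxSurplus v i j x :=
  le_csSup (ESet_finite v x i j).bddAbove ⟨S, hi, hj, rfl⟩

lemma exists_maxSurplus {i j : Fin n} (h : i ≠ j) :
    ∃ S : Finset (Fin n), i ∈ S ∧ j ∉ S ∧ maxSurplus v i j x = excess v S x := by
  have := (ESet_nonempty v x h).csSup_mem (ESet_finite v x i j)
  exact this

lemma DSet_finite :
    {e | ∃ (k : Fin n) (S : Finset (Fin n)), k ∉ S ∧ e = |v (insert k S) - v S - x k|}.Finite :=
  Set.Finite.subset
    (Set.finite_range (fun p : Fin n × Finset (Fin n) => |v (insert p.1 p.2) - v p.2 - x p.1|))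
    (by rintro e ⟨k, S, _, rfl⟩; exact ⟨(k, S), rfl⟩)

lemma abs_le_delta1 {k : Fin n} {S : Finset (Fin n)} (h : k ∉ S) :
    |v (insert k S) - v S - x k| ≤ delta1 x v :=
  le_csSup (DSet_finite v x).bddAbove ⟨k, S, h, rfl⟩

lemma delta1_nonneg (hn : 0 < n) : 0 ≤ delta1 x v :=
  le_trans (abs_nonneg _) (abs_le_delta1 v x (k := ⟨0, hn⟩) (S := ∅) (by simp))

lemma excess_insert {k : Fin n} {S : Finset (Fin n)} (h : k ∉ S) :
    excess v (insert k S) x = excess v S x + (v (insert k S) - v S - x k) := by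
  unfold excess
  rw [Finset.sum_insert h]
  ring

lemma excess_le_insert {k : Fin n} {S : Finset (Fin n)} (h : k ∉ S) :
    excess v S x ≤ excess v (insert k S) x + delta1 x v := by
  have h1 := abs_le_delta1 v x h
  have h2 := neg_abs_le (v (insert k S) - v S - x k)
  rw [excess_insert v x h]
  linarith

lemma insert_le_excess {k : Fin n} {S : Finset (Fin n)} (h : k ∉ S) :
    excess v (insert k S) x ≤ excess v S x + delta1 x v := by
  have h1 := abs_le_delta1 v x h
  have h2 := le_abs_self (v (insert k S) - v S - x k)
  rw [excess_insert v x h]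
  linarith

lemma excess_transfer {i j : Fin n} (h : i ≠ j) (δ : ℝ) (S : Finset (Fin n)) :
    excess v S (transfer x i j δ)
      = excess v S x + (if i ∈ S then δ else 0) - (if j ∈ S then δ else 0) := by
  have hsum : ∑ k ∈ S, transfer x i j δ k
      = ∑ k ∈ S, x k - (if i ∈ S then δ else 0) + (if j ∈ S then δ else 0) := by
    have hfun : ∀ k, transfer x i j δ k
        = x k - (if k = i then δ else 0) + (if k = j then δ else 0) := by
      intro k
      unfold transfer
      rcases eq_or_ne k i with rfl | hi
      · simp [h]
      · rcases eq_or_ne k j with rfl | hj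
        · simp [hi]
        · simp [hi, hj]
    simp only [hfun, Finset.sum_add_distrib, Finset.sum_sub_distrib, Finset.sum_ite_eq' S]
  unfold excess
  rw [hsum]
  ring

lemma indirect_transfer {i j : Fin n} (h : i ≠ j) {δ : ℝ} (hδ : delta1 x v ≤ δ) :
    indirect v (transfer x i j δ) = δ + maxSurplus v i j x := by
  have hd0 : 0 ≤ delta1 x v := delta1_nonneg v x i.pos
  apply le_antisymm
  · apply Finset.sup'_le
    intro S _
    rw [excess_transfer v x h δ S]
    by_cases hiS : i ∈ S <;> by_cases hjS : j ∈ S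
    · -- i ∈ S, j ∈ S : remove j
      simp only [hiS, hjS, if_true]
      have hjS' : j ∉ S.erase j := Finset.notMem_erase j S
      have hiS' : i ∈ S.erase j := Finset.mem_erase.mpr ⟨h, hiS⟩
      have h1 : excess v (insert j (S.erase j)) x ≤ excess v (S.erase j) x + delta1 x v :=
        insert_le_excess v x hjS'
      rw [Finset.insert_erase hjS] at h1
      have h2 := excess_le_maxSurplus v x hiS' hjS'
      linarith
    · simp only [hiS, hjS, if_true, if_false]
      have := excess_le_maxSurplus v x hiS hjS
      linarith
    · -- i ∉ S, j ∈ S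
      simp only [hiS, hjS, if_true, if_false]
      have hjS' : j ∉ S.erase j := Finset.notMem_erase j S
      have h1 : excess v (insert j (S.erase j)) x ≤ excess v (S.erase j) x + delta1 x v :=
        insert_le_excess v x hjS'
      rw [Finset.insert_erase hjS] at h1
      have hiS' : i ∉ S.erase j := fun hmem => hiS (Finset.mem_of_mem_erase hmem)
      have h2 : excess v (S.erase j) x ≤ excess v (insert i (S.erase j)) x + delta1 x v :=
        excess_le_insert v x hiS'
      have h3 : excess v (insert i (S.erase j)) x ≤ maxSurplus v i j x :=
        excess_le_maxSurplus v x (Finset.mem_insert_self i _)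
          (by simp [Finset.mem_insert, h.symm, hjS'])
      linarith
    · -- i ∉ S, j ∉ S
      simp only [hiS, hjS, if_false]
      have h1 : excess v S x ≤ excess v (insert i S) x + delta1 x v :=
        excess_le_insert v x hiS
      have h2 : excess v (insert i S) x ≤ maxSurplus v i j x :=
        excess_le_maxSurplus v x (Finset.mem_insert_self i _)
          (by simp [Finset.mem_insert, h.symm, hjS])
      linarith
  · obtain ⟨S, hiS, hjS, hS⟩ := exists_maxSurplus v x h
    have hle := Finset.le_sup' (fun S => excess v S (transfer x i j δ)) (Finset.mem_univ S)
    have heq := excess_transfer v x h δ S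
    simp only [hiS, hjS, if_true, if_false] at heq
    unfold indirect
    rw [hS]
    simp only [heq] at hle
    linarith

lemma hFun_zero_iff (hn : 2 ≤ n) (hx : ∑ k, x k = v Finset.univ) {δ : ℝ}
    (hδ : delta1 x v ≤ δ) : hFun v δ x = 0 ↔ x ∈ preKernel v := by
  have key : ∀ i j : Fin n, i ≠ j →
      indirect v (transfer x i j δ) - indirect v (transfer x j i δ)
        = maxSurplus v i j x - maxSurplus v j i x := by
    intro i j hij
    rw [indirect_transfer v x hij hδ, indirect_transfer v x hij.symm hδ]
    ring
  unfold hFun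
  rw [hx, sub_self]
  simp only [ne_eq, zero_pow, add_zero, OfNat.ofNat_ne_zero, not_false_eq_true]
  constructor
  · intro h0
    refine ⟨hx, ?_⟩
    have hterm := (Finset.sum_eq_zero_iff_of_nonneg
      (fun p _ => sq_nonneg (indirect v (transfer x p.1 p.2 δ)
        - indirect v (transfer x p.2 p.1 δ)))).mp h0
    intro i j hij
    rcases lt_or_gt_of_ne hij with hlt | hgt
    · have := hterm (i, j) (by simp [hlt])
      rw [sq_eq_zero_iff, key i j hij] at this
      linarith
    · have := hterm (j, i) (by simp [hgt])
      rw [sq_eq_zero_iff, key j i hij.symm] at this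
      linarith
  · rintro ⟨-, hker⟩
    apply Finset.sum_eq_zero
    intro p hp
    rw [Finset.mem_filter] at hp
    have hne : p.1 ≠ p.2 := ne_of_lt hp.2
    rw [key p.1 p.2 hne, hker p.1 p.2 hne]
    simp

end PKaux

/-- A pre-imputation `x` satisfies `h(x) = 0` (for `δ ≥ δ₁(x,v)`) iff `x` is in the
pre-kernel; hence the set of global minima of `h` over the pre-imputation set is the
pre-kernel. -/
theorem stmt1 {n : ℕ} (hn : 2 ≤ n) (v : Finset (Fin n) → ℝ) (hv0 : v ∅ = 0)
    (x : Fin n → ℝ) (hx : ∑ k, x k = v Finset.univ)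
    (δ : ℝ) (hδ : delta1 x v ≤ δ) :
    (hFun v δ x = 0 ↔ x ∈ preKernel v) ∧
    {y : Fin n → ℝ | (∑ k, y k = v Finset.univ) ∧
        ∀ δ' : ℝ, delta1 y v ≤ δ' → hFun v δ' y = 0} = preKernel v := by
  constructor
  · exact PKaux.hFun_zero_iff v x hn hx hδ
  · ext y
    simp only [Set.mem_setOf_eq]
    constructor
    · rintro ⟨hy, hall⟩
      exact (PKaux.hFun_zero_iff v y hn hy (le_refl _)).mp (hall _ (le_refl _))
    · intro hy
      exact ⟨hy.1, fun δ' hδ' => (PKaux.hFun_zero_iff v y hn hy.1 hδ').mpr hy⟩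
end
end

section
/- (Kohlberg's criterion, stated form) Let (N,v) be a TU game and x a pre-imputation. Then x is the pre-nucleolus of (N,v) if and only if for every real ψ, whenever the set D^v(ψ,x) = {S ⊆ N, S ≠ ∅, S ≠ N : e^v(S,x) ≥ ψ} is nonempty, it is a balanced collection over N. -/
open scoped BigOperators

noncomputable section

/-- The vector `θ(x)` of all `2ⁿ` excesses arranged in non-increasing order. -/
def theta {n : ℕ} (v : Finset (Fin n) → ℝ) (x : Fin n → ℝ) : List ℝ :=
  ((Multiset.map (fun S => excess v S x) (Finset.univ : Finset (Finset (Fin n))).val).sort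
    (· ≤ ·)).reverse

/-- Weak lexicographic order on lists of reals. -/
def lexLe (l₁ l₂ : List ℝ) : Prop := l₁ = l₂ ∨ List.Lex (· < ·) l₁ l₂

/-- `x` is the pre-nucleolus of `v`: an efficient vector lexicographically minimizing the
non-increasingly ordered vector of excesses among all pre-imputations. -/
def IsPrenucleolus {n : ℕ} (v : Finset (Fin n) → ℝ) (x : Fin n → ℝ) : Prop :=
  (∑ k, x k = v Finset.univ) ∧
    ∀ y : Fin n → ℝ, (∑ k, y k = v Finset.univ) → lexLe (theta v x) (theta v y)

/-- The Kohlberg level set `D^v(ψ,x)` of proper nonempty coalitions with excess `≥ ψ`. -/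
def Dset {n : ℕ} (v : Finset (Fin n) → ℝ) (ψ : ℝ) (x : Fin n → ℝ) :
    Finset (Finset (Fin n)) :=
  Finset.univ.filter (fun S => S.Nonempty ∧ S ≠ Finset.univ ∧ ψ ≤ excess v S x)

/-- Characteristic (indicator) vector of a coalition. -/
def indicat {n : ℕ} (S : Finset (Fin n)) : Fin n → ℝ := fun k => if k ∈ S then 1 else 0

/-- A collection of coalitions is balanced if some positive weights make the indicator
vectors sum to the all-ones vector. -/
def IsBalanced {n : ℕ} (B : Finset (Finset (Fin n))) : Prop :=
  ∃ w : Finset (Fin n) → ℝ, (∀ S ∈ B, 0 < w S) ∧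
    (∑ S ∈ B, w S • indicat S) = fun _ => (1 : ℝ)

namespace KohlbergAux


variable {n : ℕ}

/-- dot product on `Fin n → ℝ`. -/
def dot (d v : Fin n → ℝ) : ℝ := ∑ i, d i * v i

lemma dot_smul (d : Fin n → ℝ) (μ : ℝ) (v : Fin n → ℝ) : dot d (μ • v) = μ * dot d v := by
  simp [dot, Finset.mul_sum]; ring_nf
  exact Finset.sum_congr rfl fun i _ => by ring

lemma dot_smul_left (μ : ℝ) (d v : Fin n → ℝ) : dot (μ • d) v = μ * dot d v := by
  simp only [dot, Finset.mul_sum]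
  exact Finset.sum_congr rfl fun i _ => by simp [mul_assoc]

lemma dot_sub_left (d e v : Fin n → ℝ) : dot (d - e) v = dot d v - dot e v := by
  simp only [dot, ← Finset.sum_sub_distrib]
  exact Finset.sum_congr rfl fun i _ => by simp [sub_mul]

lemma dot_sub (d u v : Fin n → ℝ) : dot d (u - v) = dot d u - dot d v := by
  simp [dot, ← Finset.sum_sub_distrib]; exact Finset.sum_congr rfl fun i _ => by ring

lemma dot_self_pos {c : Fin n → ℝ} (h : c ≠ 0) : 0 < dot c c := by
  have : ∃ i, c i ≠ 0 := by
    by_contra hc; push_neg at hc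
    exact h (funext fun i => hc i)
  obtain ⟨i, hi⟩ := this
  have h1 : 0 < c i * c i := mul_self_pos.2 hi
  have h2 : ∀ j ∈ Finset.univ, 0 ≤ c j * c j := fun j _ => mul_self_nonneg _
  exact lt_of_lt_of_le h1 (Finset.single_le_sum h2 (Finset.mem_univ i))

/-- membership in the cone generated by a list of vectors. -/
def InCone : List (Fin n → ℝ) → (Fin n → ℝ) → Prop
  | [], c => c = 0
  | v :: L, c => ∃ μ : ℝ, 0 ≤ μ ∧ InCone L (c - μ • v)

lemma inCone_dot_nonneg {L : List (Fin n → ℝ)} {c d : Fin n → ℝ}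
    (h : InCone L c) (hd : ∀ v ∈ L, 0 ≤ dot d v) : 0 ≤ dot d c := by
  induction L generalizing c with
  | nil => simp only [InCone] at h; subst h; simp [dot]
  | cons v L ih =>
    obtain ⟨μ, hμ, h⟩ := h
    have h1 := ih h (fun u hu => hd u (List.mem_cons_of_mem _ hu))
    have h2 := hd v (List.mem_cons_self)
    rw [dot_sub, dot_smul] at h1
    nlinarith

lemma inCone_map_line {L : List (Fin n → ℝ)} (v : Fin n → ℝ) (f : (Fin n → ℝ) → ℝ)
    {y : Fin n → ℝ} (h : InCone (L.map (fun z => z - f z • v)) y) :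
    ∃ γ : ℝ, InCone L (y - γ • v) := by
  induction L generalizing y with
  | nil => exact ⟨0, by simpa [InCone] using h⟩
  | cons u L ih =>
    obtain ⟨μ, hμ, h⟩ := h
    obtain ⟨γ₁, hγ₁⟩ := ih h
    refine ⟨γ₁ - μ * f u, μ, hμ, ?_⟩
    convert hγ₁ using 1
    funext k
    simp [Pi.sub_apply, Pi.smul_apply, smul_eq_mul]
    ring

theorem farkas (L : List (Fin n → ℝ)) (c : Fin n → ℝ) :
    InCone L c ∨ ∃ d : Fin n → ℝ, (∀ v ∈ L, 0 ≤ dot d v) ∧ dot d c < 0 := by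
  suffices H : ∀ (m : ℕ) (L : List (Fin n → ℝ)), L.length ≤ m → ∀ c : Fin n → ℝ,
      InCone L c ∨ ∃ d : Fin n → ℝ, (∀ v ∈ L, 0 ≤ dot d v) ∧ dot d c < 0 by
    exact H L.length L le_rfl c
  intro m
  induction m with
  | zero =>
    intro L hL c
    rw [Nat.le_zero, List.length_eq_zero_iff] at hL
    subst hL
    by_cases hc : c = 0
    · exact Or.inl hc
    · refine Or.inr ⟨-c, by simp, ?_⟩
      have : dot (-c) c = -dot c c := by
        simp only [dot, ← Finset.sum_neg_distrib]
        exact Finset.sum_congr rfl fun i _ => by simp [neg_mul]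
      rw [this]
      simpa using dot_self_pos hc
  | succ m ih =>
    intro L' hL' c
    match L', hL' with
    | [], _ =>
      exact ih [] (Nat.zero_le m) c
    | v :: L, hL' =>
      have hLm : L.length ≤ m := Nat.succ_le_succ_iff.mp hL'
      rcases ih L hLm c with h | ⟨d, hd, hdc⟩
      · exact Or.inl ⟨0, le_refl _, by simpa using h⟩
      by_cases hv : 0 ≤ dot d v
      · exact Or.inr ⟨d, fun u hu => by
          rcases List.mem_cons.1 hu with rfl | hu
          exacts [hv, hd u hu], hdc⟩
      push_neg at hv
      have hdv : dot d v ≠ 0 := ne_of_lt hv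
      set f : (Fin n → ℝ) → ℝ := fun z => dot d z / dot d v with hf
      set proj : (Fin n → ℝ) → (Fin n → ℝ) := fun z => z - f z • v with hproj
      have hproj_dot : ∀ e z : Fin n → ℝ, dot (e - (dot e v / dot d v) • d) z = dot e (proj z) := by
        intro e z
        rw [dot_sub_left, dot_smul_left]
        show _ = dot e (z - f z • v)
        rw [dot_sub, dot_smul]
        simp only [hf]
        field_simp
      have hmaplen : (L.map proj).length ≤ m := by simpa using hLm
      rcases ih (L.map proj) hmaplen (proj c) with h | ⟨e, he, hec⟩
      · -- c is in the cone
        obtain ⟨γ, hγ⟩ := inCone_map_line v f h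
        have hform : c - f c • v - γ • v = c - (f c + γ) • v := by
          funext k; simp [Pi.sub_apply, Pi.smul_apply, smul_eq_mul]; ring
        rw [hproj] at hγ
        simp only at hγ
        rw [hform] at hγ
        have hnn : 0 ≤ dot d (c - (f c + γ) • v) := inCone_dot_nonneg hγ hd
        rw [dot_sub, dot_smul] at hnn
        have hpos : 0 ≤ f c + γ := by
          by_contra hneg
          push_neg at hneg
          nlinarith
        exact Or.inl ⟨f c + γ, hpos, hγ⟩
      · -- found a separating functional
        refine Or.inr ⟨e - (dot e v / dot d v) • d, fun u hu => ?_, ?_⟩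
        · rcases List.mem_cons.1 hu with rfl | hu
          · rw [hproj_dot]
            have hz : proj u = 0 := by
              funext k
              simp [hproj, hf, div_self hdv]
            rw [hz]
            simp [dot]
          · rw [hproj_dot]
            exact he (proj u) (List.mem_map_of_mem (f := proj) hu)
        · rw [hproj_dot]; exact hec



lemma dot_sum {ι : Type*} (d : Fin n → ℝ) (B : Finset ι) (w : ι → ℝ) (u : ι → Fin n → ℝ) :
    dot d (∑ S ∈ B, w S • u S) = ∑ S ∈ B, w S * dot d (u S) := by
  simp only [dot, Finset.mul_sum]
  rw [Finset.sum_comm]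
  refine Finset.sum_congr rfl fun i _ => ?_
  rw [Finset.sum_apply]
  rw [Finset.mul_sum]
  refine Finset.sum_congr rfl fun S _ => ?_
  simp [mul_comm, mul_assoc, mul_left_comm]

lemma list_sum_map_eq_finset_sum {ι : Type*} (B : Finset ι) (g : ι → Fin n → ℝ) :
    (B.toList.map g).sum = ∑ i ∈ B, g i := by
  rw [Finset.sum, ← Multiset.sum_coe]
  congr 1
  rw [← Multiset.map_coe, Finset.coe_toList]

lemma inCone_of_sum {ι : Type*} (l : List ι) (f : ι → Fin n → ℝ) (w : ι → ℝ)
    (hw : ∀ i ∈ l, 0 ≤ w i) : InCone (l.map f) ((l.map fun i => w i • f i)).sum := by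
  induction l with
  | nil => simp [InCone]
  | cons a l ih =>
    refine ⟨w a, hw a (List.mem_cons_self), ?_⟩
    have : (List.map (fun i => w i • f i) (a :: l)).sum - w a • f a
        = (List.map (fun i => w i • f i) l).sum := by
      simp
    rw [List.map_cons]
    simpa [this] using ih (fun i hi => hw i (List.mem_cons_of_mem _ hi))

lemma inCone_exists_weights {ι : Type*} [DecidableEq ι] {l : List ι} (hl : l.Nodup)
    (f : ι → Fin n → ℝ) {c : Fin n → ℝ} (h : InCone (l.map f) c) :
    ∃ w : ι → ℝ, (∀ i ∈ l, 0 ≤ w i) ∧ c = ((l.map fun i => w i • f i)).sum := by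
  induction l generalizing c with
  | nil => exact ⟨fun _ => 0, by simp, by simpa [InCone] using h⟩
  | cons a l ih =>
    obtain ⟨μ, hμ, h⟩ := h
    obtain ⟨w, hw, hsum⟩ := ih (List.Nodup.of_cons hl) h
    refine ⟨Function.update w a μ, ?_, ?_⟩
    · intro i hi
      rcases List.mem_cons.1 hi with rfl | hi
      · simp [hμ]
      · by_cases hia : i = a
        · subst hia; simp [hμ]
        · simpa [Function.update_of_ne hia] using hw i hi
    · have hanotl : a ∉ l := (List.nodup_cons.1 hl).1
      have : (l.map fun i => Function.update w a μ i • f i) = l.map fun i => w i • f i := by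
        refine List.map_congr_left fun i hi => ?_
        have : i ≠ a := fun hia => hanotl (hia ▸ hi)
        simp [Function.update_of_ne this]
      rw [List.map_cons, List.sum_cons, this, Function.update_self, ← hsum]
      funext k
      simp

lemma inCone_append {L₁ L₂ : List (Fin n → ℝ)} {c : Fin n → ℝ} :
    InCone (L₁ ++ L₂) c ↔ ∃ c₁, InCone L₁ c₁ ∧ InCone L₂ (c - c₁) := by
  induction L₁ generalizing c with
  | nil =>
    constructor
    · intro h; exact ⟨0, rfl, by simpa using h⟩
    · rintro ⟨c₁, h₁, h₂⟩
      have : c₁ = 0 := h₁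
      subst this
      simpa using h₂
  | cons v L₁ ih =>
    constructor
    · rintro ⟨μ, hμ, h⟩
      obtain ⟨c₁, h₁, h₂⟩ := ih.1 h
      refine ⟨c₁ + μ • v, ⟨μ, hμ, by simpa using h₁⟩, by
        have : c - (c₁ + μ • v) = c - μ • v - c₁ := by abel
        rw [this]; exact h₂⟩
    · rintro ⟨c₁, ⟨μ, hμ, h₁⟩, h₂⟩
      refine ⟨μ, hμ, ih.2 ⟨c₁ - μ • v, h₁, ?_⟩⟩
      have : c - μ • v - (c₁ - μ • v) = c - c₁ := by abel
      rw [this]; exact h₂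



lemma dot_neg (d u : Fin n → ℝ) : dot d (-u) = - dot d u := by
  simp only [dot, ← Finset.sum_neg_distrib]
  exact Finset.sum_congr rfl fun i _ => by rw [Pi.neg_apply]; ring

lemma dot_indicat (d : Fin n → ℝ) (S : Finset (Fin n)) :
    dot d (indicat S) = ∑ k ∈ S, d k := by
  simp only [dot, indicat, mul_ite, mul_one, mul_zero]
  rw [Finset.sum_ite_mem, Finset.univ_inter]

lemma dot_ones (d : Fin n → ℝ) : dot d (fun _ => (1:ℝ)) = ∑ k, d k := by
  simp [dot]

lemma dot_ones_indicat (S : Finset (Fin n)) :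
    dot (fun _ => (1:ℝ)) (indicat S) = S.card := by
  rw [dot_indicat]; simp

lemma dot_ones_ones : dot (fun _ => (1:ℝ)) (fun _ => (1:ℝ) : Fin n → ℝ) = n := by
  simp [dot]

set_option maxHeartbeats 1000000 in
theorem balanced_of_crit (hn : 0 < n) (B : Finset (Finset (Fin n))) (hBne : B.Nonempty)
    (hmem : ∀ S ∈ B, S.Nonempty)
    (H : ∀ d : Fin n → ℝ, (∑ k, d k) = 0 → (∀ S ∈ B, 0 ≤ ∑ k ∈ S, d k) →
      ∀ S ∈ B, (∑ k ∈ S, d k) = 0) :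
    IsBalanced B := by
  classical
  set ones : Fin n → ℝ := (fun _ => 1) with hones
  have Hdot : ∀ d : Fin n → ℝ, dot d ones = 0 → (∀ S ∈ B, 0 ≤ dot d (indicat S)) →
      ∀ S ∈ B, dot d (indicat S) = 0 := by
    intro d h1 h2 S hS
    rw [dot_indicat]
    refine H d (by rw [← dot_ones d]; exact h1) (fun S' hS' => ?_) S hS
    rw [← dot_indicat]; exact h2 S' hS'
  set Rep : (Finset (Fin n) → ℝ) → Prop :=
    fun w => (∀ S ∈ B, 0 ≤ w S) ∧ (∑ S ∈ B, w S • indicat S) = ones with hRep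
  -- existence of a representation
  have hRepEx : ∃ w, Rep w := by
    rcases farkas (B.toList.map indicat) ones with h | ⟨d, hd, hdc⟩
    · obtain ⟨w, hw, hsum⟩ := inCone_exists_weights B.nodup_toList indicat h
      refine ⟨w, fun S hS => hw S (Finset.mem_toList.2 hS), ?_⟩
      rw [hsum, list_sum_map_eq_finset_sum]
    · exfalso
      set d' : Fin n → ℝ := d - ((dot d ones)/n) • ones with hd'
      have hd'c : dot d' ones = 0 := by
        rw [hd', dot_sub_left, dot_smul_left, dot_ones_ones]
        field_simp
        ring
      have hpos : ∀ S ∈ B, 0 < dot d' (indicat S) := by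
        intro S hS
        rw [hd', dot_sub_left, dot_smul_left, dot_ones_indicat]
        have h1 : 0 ≤ dot d (indicat S) :=
          hd _ (List.mem_map_of_mem (f := indicat) (Finset.mem_toList.2 hS))
        have h2 : (0:ℝ) < S.card := by
          have := Finset.card_pos.2 (hmem S hS)
          exact_mod_cast this
        have h3 : dot d ones / n < 0 := div_neg_of_neg_of_pos hdc (by exact_mod_cast hn)
        nlinarith
      obtain ⟨S, hS⟩ := hBne
      exact absurd (Hdot d' hd'c (fun S' hS' => le_of_lt (hpos S' hS')) S hS)
        (ne_of_gt (hpos S hS))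
  set T : Finset (Finset (Fin n)) := B.filter (fun S => ∃ w, Rep w ∧ 0 < w S) with hT
  have hTsub : T ⊆ B := Finset.filter_subset _ _
  have hzero : ∀ w, Rep w → ∀ S ∈ B, S ∉ T → w S = 0 := by
    intro w hw S hS hST
    rcases lt_or_eq_of_le (hw.1 S hS) with h | h
    · exact absurd (Finset.mem_filter.2 ⟨hS, w, hw, h⟩) hST
    · exact h.symm
  have hTne : T.Nonempty := by
    obtain ⟨w, hw⟩ := hRepEx
    by_contra hTe
    rw [Finset.not_nonempty_iff_eq_empty] at hTe
    have hall : ∀ S ∈ B, w S = 0 := fun S hS => hzero w hw S hS (by simp [hTe])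
    have := hw.2
    rw [Finset.sum_congr rfl (fun S hS => by rw [hall S hS, zero_smul])] at this
    simp only [Finset.sum_const, smul_zero] at this
    have := congrFun this ⟨0, hn⟩
    simp [hones] at this
  -- the choice of representations
  set wc : Finset (Fin n) → (Finset (Fin n) → ℝ) := fun S' =>
    if h : ∃ w, Rep w ∧ 0 < w S' then Classical.choose h else 0 with hwc
  have hwc_spec : ∀ S' ∈ T, Rep (wc S') ∧ 0 < wc S' S' := by
    intro S' hS'
    have h : ∃ w, Rep w ∧ 0 < w S' := (Finset.mem_filter.1 hS').2
    simp only [hwc, dif_pos h]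
    exact Classical.choose_spec h
  have hTcard : (0:ℝ) < T.card := by exact_mod_cast Finset.card_pos.2 hTne
  set wstar : Finset (Fin n) → ℝ := fun S => (∑ S' ∈ T, wc S' S) / T.card with hwstar
  have hwstar_nonneg : ∀ S ∈ B, 0 ≤ wstar S := by
    intro S hS
    apply div_nonneg _ (le_of_lt hTcard)
    exact Finset.sum_nonneg fun S' hS' => (hwc_spec S' hS').1.1 S hS
  have hwstar_rep : Rep wstar := by
    refine ⟨hwstar_nonneg, ?_⟩
    funext k
    rw [Finset.sum_apply]
    have step : ∀ S ∈ B, (wstar S • indicat S) k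
        = (∑ S' ∈ T, wc S' S * indicat S k) / T.card := by
      intro S _
      rw [Pi.smul_apply, smul_eq_mul, hwstar]
      rw [div_mul_eq_mul_div, Finset.sum_mul]
    rw [Finset.sum_congr rfl step, ← Finset.sum_div, Finset.sum_comm]
    have inner : ∀ S' ∈ T, (∑ S ∈ B, wc S' S * indicat S k) = 1 := by
      intro S' hS'
      have := congrFun ((hwc_spec S' hS').1.2) k
      rw [Finset.sum_apply] at this
      simpa using this
    rw [Finset.sum_congr rfl inner]
    simp only [Finset.sum_const, nsmul_eq_mul, mul_one]
    exact div_self (ne_of_gt hTcard)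
  have hwstar_zero : ∀ S ∈ B, S ∉ T → wstar S = 0 := hzero wstar hwstar_rep
  have hwstar_pos : ∀ S ∈ T, 0 < wstar S := by
    intro S hS
    apply div_pos _ hTcard
    have : ∀ S' ∈ T, 0 ≤ wc S' S := fun S' hS' => (hwc_spec S' hS').1.1 S (hTsub hS)
    calc (0:ℝ) < wc S S := (hwc_spec S hS).2
    _ ≤ ∑ S' ∈ T, wc S' S := Finset.single_le_sum this hS
  -- main dichotomy
  by_cases hBT : B ⊆ T
  · have hBTeq : T = B := Finset.Subset.antisymm hTsub hBT
    exact ⟨wstar, fun S hS => hwstar_pos S (hBTeq ▸ hS), hwstar_rep.2⟩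
  · exfalso
    obtain ⟨S₀, hS₀B, hS₀T⟩ := Finset.not_subset.1 hBT
    set Lgen : List (Fin n → ℝ) :=
      ((B \ T).toList.map indicat) ++ ((T.toList.map indicat) ++
        (T.toList.map (fun S => -indicat S))) with hLgen
    rcases farkas Lgen (-indicat S₀) with h | ⟨d, hd, hdc⟩
    · -- cone case: build a representation with positive weight at S₀
      obtain ⟨c₁, h₁, hrest⟩ := inCone_append.1 h
      obtain ⟨c₂, h₂, h₃⟩ := inCone_append.1 hrest
      obtain ⟨lam, hlam, hc₁⟩ := inCone_exists_weights (B \ T).nodup_toList indicat h₁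
      obtain ⟨mup, hmup, hc₂⟩ := inCone_exists_weights T.nodup_toList indicat h₂
      obtain ⟨mum, hmum, hc₃⟩ := inCone_exists_weights T.nodup_toList (fun S => -indicat S) h₃
      rw [list_sum_map_eq_finset_sum] at hc₁ hc₂ hc₃
      replace hlam : ∀ S ∈ B \ T, 0 ≤ lam S := fun S hS => hlam S (Finset.mem_toList.2 hS)
      replace hmup : ∀ S ∈ T, 0 ≤ mup S := fun S hS => hmup S (Finset.mem_toList.2 hS)
      replace hmum : ∀ S ∈ T, 0 ≤ mum S := fun S hS => hmum S (Finset.mem_toList.2 hS)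
      -- the star identity
      have hstar : indicat S₀ + (∑ S ∈ B \ T, lam S • indicat S)
          + (∑ S ∈ T, (mup S - mum S) • indicat S) = 0 := by
        funext k
        have e1 := congrFun hc₁ k
        have e2 := congrFun hc₂ k
        have e3 := congrFun hc₃ k
        simp only [Finset.sum_apply, Pi.smul_apply, Pi.neg_apply, Pi.sub_apply, Pi.add_apply,
          Pi.zero_apply, smul_eq_mul, mul_neg] at e1 e2 e3 ⊢
        rw [Finset.sum_neg_distrib] at e3
        have hsplit : ∑ S ∈ T, (mup S - mum S) * indicat S k
            = (∑ S ∈ T, mup S * indicat S k) - ∑ S ∈ T, mum S * indicat S k := by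
          rw [← Finset.sum_sub_distrib]
          exact Finset.sum_congr rfl fun _ _ => by ring
        rw [hsplit]
        linarith
      -- the perturbation
      set q : Finset (Fin n) → ℝ := fun S =>
        if S ∈ T then mup S - mum S else (lam S + if S = S₀ then 1 else 0) with hq
      set K : ℝ := 1 + ∑ S ∈ T, |q S| / wstar S with hK
      have hK1 : (1:ℝ) ≤ K := by
        rw [hK]
        have : 0 ≤ ∑ S ∈ T, |q S| / wstar S :=
          Finset.sum_nonneg fun S hS => div_nonneg (abs_nonneg _) (le_of_lt (hwstar_pos S hS))
        linarith
      have hKpos : (0:ℝ) < K := lt_of_lt_of_le one_pos hK1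
      have hqK : ∀ S ∈ T, |q S| / K ≤ wstar S := by
        intro S hS
        have h2 : |q S| / wstar S ≤ ∑ S' ∈ T, |q S'| / wstar S' :=
          Finset.single_le_sum (f := fun S' => |q S'| / wstar S')
            (fun S' hS' => div_nonneg (abs_nonneg _) (hwstar_pos S' hS').le) hS
        have h1 : |q S| / wstar S ≤ K := by rw [hK]; linarith
        have h3 : |q S| ≤ K * wstar S := (div_le_iff₀ (hwstar_pos S hS)).1 h1
        rw [div_le_iff₀ hKpos]
        linarith [mul_comm K (wstar S)]
      have hqsum : ∑ S ∈ B, q S • indicat S = 0 := by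
        funext k
        have hs := congrFun hstar k
        simp only [Finset.sum_apply, Pi.smul_apply, Pi.add_apply, Pi.zero_apply,
          smul_eq_mul] at hs ⊢
        rw [← Finset.sum_sdiff hTsub]
        have hBTq : ∑ S ∈ B \ T, q S * indicat S k
            = (∑ S ∈ B \ T, lam S * indicat S k) + indicat S₀ k := by
          have step : ∀ S ∈ B \ T, q S * indicat S k
              = lam S * indicat S k + (if S = S₀ then indicat S₀ k else 0) := by
            intro S hS
            have hST : S ∉ T := (Finset.mem_sdiff.1 hS).2
            by_cases h : S = S₀
            · subst h; simp [hq, if_neg hST]; ring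
            · simp only [hq, if_neg hST, if_neg h]; ring
          rw [Finset.sum_congr rfl step, Finset.sum_add_distrib]
          rw [Finset.sum_ite_eq' (B \ T) S₀ (fun _ => indicat S₀ k)]
          rw [if_pos (Finset.mem_sdiff.2 ⟨hS₀B, hS₀T⟩)]
        have hTq : ∑ S ∈ T, q S * indicat S k = ∑ S ∈ T, (mup S - mum S) * indicat S k := by
          refine Finset.sum_congr rfl fun S hS => ?_
          simp only [hq, if_pos hS]
        rw [hBTq, hTq]
        linarith
      set w' : Finset (Fin n) → ℝ := fun S => wstar S + q S / K with hw'
      have hlamS₀ : 0 ≤ lam S₀ := hlam S₀ (Finset.mem_sdiff.2 ⟨hS₀B, hS₀T⟩)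
      have hqS₀ : q S₀ = lam S₀ + 1 := by simp [hq, if_neg hS₀T]
      have hw'pos : 0 < w' S₀ := by
        rw [hw']
        simp only
        rw [hwstar_zero S₀ hS₀B hS₀T, hqS₀]
        have : 0 < (lam S₀ + 1) / K := div_pos (by linarith) hKpos
        linarith
      have hw'nonneg : ∀ S ∈ B, 0 ≤ w' S := by
        intro S hS
        rw [hw']
        simp only
        by_cases hST : S ∈ T
        · have h1 := hqK S hST
          have h2 : -(|q S| / K) ≤ q S / K := by
            have : -|q S| ≤ q S := neg_abs_le (q S)
            rw [← neg_div]
            gcongr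
          linarith
        · have h1 : 0 ≤ q S := by
            rw [hq]
            simp only [if_neg hST]
            have := hlam S (Finset.mem_sdiff.2 ⟨hS, hST⟩)
            by_cases h : S = S₀ <;> simp [h] <;> linarith
          have := hwstar_nonneg S hS
          have : 0 ≤ q S / K := div_nonneg h1 hKpos.le
          linarith [hwstar_nonneg S hS]
      have hw'rep : (∑ S ∈ B, w' S • indicat S) = ones := by
        have expand : ∀ S ∈ B, w' S • indicat S
            = wstar S • indicat S + (1/K) • (q S • indicat S) := by
          intro S _
          rw [hw']
          simp only
          rw [add_smul, smul_smul]
          congr 2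
          field_simp
        rw [Finset.sum_congr rfl expand, Finset.sum_add_distrib, ← Finset.smul_sum, hqsum,
          smul_zero, add_zero]
        exact hwstar_rep.2
      exact hS₀T (Finset.mem_filter.2 ⟨hS₀B, w', ⟨hw'nonneg, hw'rep⟩, hw'pos⟩)
    · -- separating functional case: contradicts H
      have hdBT : ∀ S ∈ B \ T, 0 ≤ dot d (indicat S) := by
        intro S hS
        exact hd _ (List.mem_append_left _ (List.mem_map_of_mem (f := indicat) (Finset.mem_toList.2 hS)))
      have hdT1 : ∀ S ∈ T, 0 ≤ dot d (indicat S) := fun S hS =>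
        hd _ (List.mem_append_right _ (List.mem_append_left _
          (List.mem_map_of_mem (f := indicat) (Finset.mem_toList.2 hS))))
      have hdT2 : ∀ S ∈ T, 0 ≤ dot d (-indicat S) := fun S hS =>
        hd _ (List.mem_append_right _ (List.mem_append_right _
          (List.mem_map_of_mem (Finset.mem_toList.2 hS))))
      have hdT0 : ∀ S ∈ T, dot d (indicat S) = 0 := by
        intro S hS
        have := hdT2 S hS
        rw [dot_neg] at this
        linarith [hdT1 S hS]
      have hdS₀ : 0 < dot d (indicat S₀) := by
        rw [dot_neg] at hdc; linarith
      have hB0 : ∀ S ∈ B, 0 ≤ dot d (indicat S) := by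
        intro S hS
        by_cases hST : S ∈ T
        · exact le_of_eq (hdT0 S hST).symm
        · exact hdBT S (Finset.mem_sdiff.2 ⟨hS, hST⟩)
      have hdones : dot d ones = 0 := by
        rw [← hwstar_rep.2, dot_sum]
        refine Finset.sum_eq_zero fun S hS => ?_
        by_cases hST : S ∈ T
        · rw [hdT0 S hST, mul_zero]
        · rw [hwstar_zero S hS hST, zero_mul]
      exact absurd (Hdot d hdones hB0 S₀ hS₀B) (ne_of_gt hdS₀)



/-- sorted in non-increasing order -/
abbrev SortedD (l : List ℝ) : Prop := List.Pairwise (fun a b : ℝ => b ≤ a) l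

lemma sortedD_get_mono {l : List ℝ} (h : SortedD l) {i j : ℕ} (hij : i ≤ j)
    (hj : j < l.length) : l.get ⟨j, hj⟩ ≤ l.get ⟨i, lt_of_le_of_lt hij hj⟩ := by
  rcases eq_or_lt_of_le hij with rfl | hlt
  · exact le_refl _
  · exact h.rel_get_of_lt (by exact hlt)

lemma sorted_filter_eq_take (p : ℝ → Bool) (hp : ∀ x y : ℝ, x ≤ y → p x = true → p y = true)
    {l : List ℝ} (h : SortedD l) : l.filter p = l.take (l.countP p) := by
  induction l with
  | nil => simp
  | cons a l ih =>
    have ha : ∀ b ∈ l, b ≤ a := fun b hb => (List.pairwise_cons.1 h).1 b hb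
    have hl : SortedD l := (List.pairwise_cons.1 h).2
    by_cases hpa : p a = true
    · rw [List.filter_cons_of_pos hpa, List.countP_cons_of_pos hpa]
      rw [List.take_succ_cons, ih hl]
    · have hnone : ∀ b ∈ l, ¬ p b = true := fun b hb hpb =>
        hpa (hp b a (ha b hb) hpb)
      have h1 : l.filter p = [] := List.filter_eq_nil_iff.2 fun b hb => hnone b hb
      have h2 : l.countP p = 0 := List.countP_eq_zero.2 fun b hb => hnone b hb
      rw [List.filter_cons_of_neg (by simpa using hpa), h1, List.countP_cons_of_neg (by simpa using hpa), h2]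
      simp

lemma pred_get_of_lt_countP (p : ℝ → Bool) (hp : ∀ x y : ℝ, x ≤ y → p x = true → p y = true)
    {l : List ℝ} (h : SortedD l) {j : ℕ} (hj : j < l.countP p) :
    p (l.get ⟨j, lt_of_lt_of_le hj (List.countP_le_length)⟩) = true := by
  have hjl : j < l.length := lt_of_lt_of_le hj (List.countP_le_length)
  have htake : (l.take (l.countP p)).get ⟨j, by simpa [List.length_take] using lt_min hj hjl⟩
      = l.get ⟨j, hjl⟩ := by
    simp
  have hmem : l.get ⟨j, hjl⟩ ∈ l.filter p := by
    rw [sorted_filter_eq_take p hp h, ← htake]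
    exact List.get_mem _ _
  exact (List.mem_filter.1 hmem).2

lemma countP_le_of_pred_get (p : ℝ → Bool) (hp : ∀ x y : ℝ, x ≤ y → p x = true → p y = true)
    {l : List ℝ} (h : SortedD l) {j : ℕ} (hj : j < l.length)
    (hpj : p (l.get ⟨j, hj⟩) = true) : j + 1 ≤ l.countP p := by
  by_contra hcon
  push_neg at hcon
  have hcp : l.countP p ≤ j := Nat.lt_succ_iff.1 hcon
  set m := l.countP p with hm
  have hmem : l.get ⟨j, hj⟩ ∈ l.drop m := by
    have : l.get ⟨j, hj⟩ = (l.drop m).get ⟨j - m, by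
        rw [List.length_drop]; omega⟩ := by
      simp only [List.get_eq_getElem, List.getElem_drop, Nat.add_sub_cancel' hcp]
    rw [this]
    exact List.get_mem _ _
  -- count in the drop part is zero
  have hsplit : l.countP p = (l.take m).countP p + (l.drop m).countP p := by
    rw [← List.countP_append, List.take_append_drop]
  have htakecount : (l.take m).countP p = m := by
    rw [← sorted_filter_eq_take p hp h, hm, List.countP_filter]
    simp [List.countP_eq_length_filter]
  have hdropzero : (l.drop m).countP p = 0 := by omega
  have := List.countP_eq_zero.1 hdropzero _ hmem
  exact this hpj

lemma countP_lt_self_le {l : List ℝ} (h : SortedD l) {j : ℕ} (hj : j < l.length) :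
    l.countP (fun a => decide (l.get ⟨j, hj⟩ < a)) ≤ j := by
  by_contra hcon
  push_neg at hcon
  have := pred_get_of_lt_countP (fun a => decide (l.get ⟨j, hj⟩ < a))
    (fun x y hxy hx => by
      simp only [decide_eq_true_eq] at *
      exact lt_of_lt_of_le hx hxy) h hcon
  simp at this

lemma lex_of_first_diff : ∀ (k : ℕ) (l₁ l₂ : List ℝ) (hl₁ : k < l₁.length) (hl₂ : k < l₂.length),
    (∀ i (h1 : i < k), l₁.get ⟨i, lt_trans h1 hl₁⟩ = l₂.get ⟨i, lt_trans h1 hl₂⟩) →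
    l₁.get ⟨k, hl₁⟩ < l₂.get ⟨k, hl₂⟩ → List.Lex (· < ·) l₁ l₂ := by
  intro k
  induction k with
  | zero =>
    intro l₁ l₂ hl₁ hl₂ _ hlt
    match l₁, l₂ with
    | a :: l₁, b :: l₂ => exact List.Lex.rel (by simpa using hlt)
  | succ k ih =>
    intro l₁ l₂ hl₁ hl₂ hpre hlt
    match l₁, l₂ with
    | a :: l₁, b :: l₂ =>
      have hab : a = b := by simpa using hpre 0 (Nat.succ_pos k)
      subst hab
      refine List.Lex.cons ?_
      refine ih l₁ l₂ (by simpa using hl₁) (by simpa using hl₂) ?_ (by simpa using hlt)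
      intro i hi
      simpa using hpre (i+1) (by omega)


section Compare
variable {ι : Type} [Fintype ι]

lemma countP_eq_card (a : ι → ℝ) (α : List ℝ)
    (hα : (α : Multiset ℝ) = Multiset.map a Finset.univ.val) (p : ℝ → Bool) :
    α.countP p = (Finset.univ.filter (fun i => p (a i) = true)).card := by
  classical
  have h1 : α.countP p = Multiset.countP (fun z => p z = true) (↑α : Multiset ℝ) := by
    rw [Multiset.coe_countP]
    congr 1
    funext z
    simp
  rw [h1, hα, Multiset.countP_map]
  rfl

lemma filter_sum_eq (a : ι → ℝ) (α : List ℝ)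
    (hα : (α : Multiset ℝ) = Multiset.map a Finset.univ.val) (p : ℝ → Bool) :
    (α.filter p).sum = ∑ i ∈ Finset.univ.filter (fun i => p (a i) = true), a i := by
  classical
  have h1 : (↑(α.filter p) : Multiset ℝ) = Multiset.filter (fun z => p z = true) (↑α : Multiset ℝ) := by
    rw [Multiset.filter_coe]
    congr 1
    apply List.filter_congr
    intro z _
    simp
  have h2 : (α.filter p).sum = Multiset.sum (↑(α.filter p) : Multiset ℝ) := rfl
  rw [h2, h1, hα, Multiset.filter_map]
  rfl

lemma length_eq_card (a : ι → ℝ) (α : List ℝ)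
    (hα : (α : Multiset ℝ) = Multiset.map a Finset.univ.val) :
    α.length = Fintype.card ι := by
  have : Multiset.card (↑α : Multiset ℝ) = Multiset.card (Multiset.map a Finset.univ.val) := by
    rw [hα]
  simpa using this

/-- Key comparison lemma for the (⇒) direction. -/
theorem lex_of_level_dominance (a b : ι → ℝ) (t : ℝ) (α β : List ℝ)
    (hαs : SortedD α) (hβs : SortedD β)
    (hαm : (α : Multiset ℝ) = Multiset.map a Finset.univ.val)
    (hβm : (β : Multiset ℝ) = Multiset.map b Finset.univ.val)
    (h1 : ∀ i, t ≤ b i → a i ≤ b i) (h2 : ∀ i, t ≤ a i → t ≤ b i)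
    (h3 : ∃ i, t ≤ b i ∧ a i < b i) :
    List.Lex (· < ·) α β := by
  classical
  have hlα : α.length = Fintype.card ι := length_eq_card a α hαm
  have hlβ : β.length = Fintype.card ι := length_eq_card b β hβm
  have hupward : ∀ (t' : ℝ) (x y : ℝ), x ≤ y → decide (t' ≤ x) = true → decide (t' ≤ y) = true := by
    intro t' x y hxy hx
    simp only [decide_eq_true_eq] at *
    exact le_trans hx hxy
  have hupward' : ∀ (t' : ℝ) (x y : ℝ), x ≤ y → decide (t' < x) = true → decide (t' < y) = true := by
    intro t' x y hxy hx
    simp only [decide_eq_true_eq] at *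
    exact lt_of_lt_of_le hx hxy
  set pB : ℝ → Bool := fun z => decide (t ≤ z) with hpB
  set p : ℕ := β.countP pB with hp
  have hple : p ≤ β.length := List.countP_le_length
  -- step 1 : pointwise domination in the region above `t`
  have step1 : ∀ j (hjβ : j < β.length) (hjα : j < α.length),
      t ≤ β.get ⟨j, hjβ⟩ → α.get ⟨j, hjα⟩ ≤ β.get ⟨j, hjβ⟩ := by
    intro j hjβ hjα ht
    by_contra hcon
    push_neg at hcon
    have hc1 : j + 1 ≤ α.countP (fun z => decide (α.get ⟨j, hjα⟩ ≤ z)) :=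
      countP_le_of_pred_get _ (hupward _) hαs hjα (by simp)
    rw [countP_eq_card a α hαm] at hc1
    have hsubset : Finset.univ.filter (fun i => decide (α.get ⟨j, hjα⟩ ≤ a i) = true)
        ⊆ Finset.univ.filter (fun i => decide (β.get ⟨j, hjβ⟩ < b i) = true) := by
      intro i hi
      rw [Finset.mem_filter] at hi ⊢
      refine ⟨Finset.mem_univ _, ?_⟩
      rw [decide_eq_true_eq] at *
      have hai : α.get ⟨j, hjα⟩ ≤ a i := hi.2
      have htai : t ≤ a i := le_trans (le_trans ht hcon.le) hai
      have hbi : t ≤ b i := h2 i htai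
      have := h1 i hbi
      exact lt_of_lt_of_le hcon (le_trans hai this)
    have hc2 := Finset.card_le_card hsubset
    have hc3 : β.countP (fun z => decide (β.get ⟨j, hjβ⟩ < z)) ≤ j := countP_lt_self_le hβs hjβ
    rw [countP_eq_card b β hβm] at hc3
    omega
  -- p is positive
  obtain ⟨i₀, hi₀t, hi₀lt⟩ := h3
  have hppos : 0 < p := by
    rw [hp, countP_eq_card b β hβm]
    refine Finset.card_pos.2 ⟨i₀, ?_⟩
    rw [Finset.mem_filter]
    exact ⟨Finset.mem_univ _, by simpa [hpB] using hi₀t⟩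
  -- step 2 : the lists differ at some index below p
  have step2 : ∃ j, ∃ (hjα : j < α.length) (hjβ : j < β.length),
      j < p ∧ α.get ⟨j, hjα⟩ ≠ β.get ⟨j, hjβ⟩ := by
    by_contra hall
    push_neg at hall
    have hpre : ∀ j (hjα : j < α.length) (hjβ : j < β.length), j < p →
        α.get ⟨j, hjα⟩ = β.get ⟨j, hjβ⟩ := fun j hjα hjβ hjp => hall j hjα hjβ hjp
    -- every index below p in α also satisfies the predicate
    have hq : p ≤ α.countP pB := by
      have hlt : p - 1 < p := by omega
      have hjα : p - 1 < α.length := by omega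
      have hjβ : p - 1 < β.length := by omega
      have hβt : t ≤ β.get ⟨p - 1, hjβ⟩ := by
        have := pred_get_of_lt_countP pB (hupward t) hβs (by omega : p - 1 < β.countP pB)
        simpa [hpB] using this
      have hαt : t ≤ α.get ⟨p - 1, hjα⟩ := by
        rw [hpre (p-1) hjα hjβ hlt]
        exact hβt
      have := countP_le_of_pred_get pB (hupward t) hαs hjα (by simpa [hpB] using hαt)
      omega
    have hqle : α.countP pB ≤ p := by
      rw [countP_eq_card a α hαm, hp, countP_eq_card b β hβm]
      apply Finset.card_le_card
      intro i hi
      rw [Finset.mem_filter] at hi ⊢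
      refine ⟨Finset.mem_univ _, ?_⟩
      have := hi.2
      rw [decide_eq_true_eq] at *
      exact h2 i this
    have hqeq : α.countP pB = p := le_antisymm hqle hq
    -- the filtered sets of indices coincide
    have hVW : Finset.univ.filter (fun i => pB (a i) = true)
        = Finset.univ.filter (fun i => pB (b i) = true) := by
      apply Finset.eq_of_subset_of_card_le
      · intro i hi
        rw [Finset.mem_filter] at hi ⊢
        refine ⟨Finset.mem_univ _, ?_⟩
        have := hi.2
        simp only [hpB, decide_eq_true_eq] at *
        exact h2 i this
      · rw [← countP_eq_card a α hαm, ← countP_eq_card b β hβm, hqeq, hp]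
    -- equal prefixes give equal filtered sums
    have htake : α.take p = β.take p := by
      apply List.ext_get
      · rw [List.length_take, List.length_take, hlα, hlβ]
      · intro i h1' h2'
        rw [List.length_take] at h1'
        have hip : i < p := lt_of_lt_of_le h1' (min_le_left _ _)
        have hiα : i < α.length := by omega
        have hiβ : i < β.length := by omega
        simp only [List.get_eq_getElem, List.getElem_take]
        simpa using hpre i hiα hiβ hip
    have hsums : (α.filter pB).sum = (β.filter pB).sum := by
      rw [sorted_filter_eq_take pB (hupward t) hαs, sorted_filter_eq_take pB (hupward t) hβs,
        hqeq, ← hp, htake]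
    rw [filter_sum_eq a α hαm, filter_sum_eq b β hβm, hVW] at hsums
    -- strict inequality of the sums
    have hstrict : (∑ i ∈ Finset.univ.filter (fun i => pB (b i) = true), a i)
        < ∑ i ∈ Finset.univ.filter (fun i => pB (b i) = true), b i := by
      apply Finset.sum_lt_sum
      · intro i hi
        rw [Finset.mem_filter] at hi
        have := hi.2
        simp only [hpB, decide_eq_true_eq] at this
        exact h1 i this
      · refine ⟨i₀, ?_, hi₀lt⟩
        rw [Finset.mem_filter]
        exact ⟨Finset.mem_univ _, by simpa [hpB] using hi₀t⟩
    rw [hsums] at hstrict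
    exact lt_irrefl _ hstrict
  -- step 3 : take the first differing index
  obtain ⟨j₁, hj₁α, hj₁β, hj₁p, hj₁ne⟩ := step2
  have hQ : ∃ j, ∃ (hjα : j < α.length) (hjβ : j < β.length),
      j < p ∧ α.get ⟨j, hjα⟩ ≠ β.get ⟨j, hjβ⟩ := ⟨j₁, hj₁α, hj₁β, hj₁p, hj₁ne⟩
  classical
  set j₀ := Nat.find hQ with hj₀
  obtain ⟨hj₀α, hj₀β, hj₀p, hj₀ne⟩ := Nat.find_spec hQ
  have hβt : t ≤ β.get ⟨j₀, hj₀β⟩ := by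
    have h5 := pred_get_of_lt_countP pB (hupward t) hβs (by rw [← hp]; exact hj₀p)
    simp only [hpB, decide_eq_true_eq] at h5
    exact h5
  have hle := step1 j₀ hj₀β hj₀α hβt
  have hlt : α.get ⟨j₀, hj₀α⟩ < β.get ⟨j₀, hj₀β⟩ := lt_of_le_of_ne hle hj₀ne
  apply lex_of_first_diff j₀ α β hj₀α hj₀β _ hlt
  intro i hi
  by_contra hne
  exact Nat.find_min hQ hi ⟨lt_trans hi hj₀α, lt_trans hi hj₀β, lt_trans hi hj₀p, hne⟩


lemma list_countP_eq_multiset (α : List ℝ) (q : ℝ → Prop) [DecidablePred q] :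
    α.countP (fun z => decide (q z)) = Multiset.countP q (α : Multiset ℝ) := by
  rw [Multiset.coe_countP]

lemma ms_countP_filter_of_imp {q r : ℝ → Prop} [DecidablePred q] [DecidablePred r]
    (h : ∀ z, q z → r z) (s : Multiset ℝ) :
    Multiset.countP q (s.filter r) = Multiset.countP q s := by
  conv_rhs => rw [← Multiset.filter_add_not r s]
  rw [Multiset.countP_add]
  have : Multiset.countP q (Multiset.filter (fun z => ¬ r z) s) = 0 := by
    rw [Multiset.countP_eq_zero]
    intro z hz hq
    exact (Multiset.mem_filter.1 hz).2 (h z hq)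
  omega

/-- Key comparison lemma for the (⇐) direction. -/
theorem lex_of_filter_lt (a b : ι → ℝ) (c : ℝ) (α β : List ℝ)
    (hαs : SortedD α) (hβs : SortedD β)
    (hαm : (α : Multiset ℝ) = Multiset.map a Finset.univ.val)
    (hβm : (β : Multiset ℝ) = Multiset.map b Finset.univ.val)
    (hsub : Multiset.filter (fun z => c < z) (Multiset.map a Finset.univ.val)
        ≤ Multiset.filter (fun z => c < z) (Multiset.map b Finset.univ.val))
    (hcard : Multiset.card (Multiset.filter (fun z => c < z) (Multiset.map a Finset.univ.val))
        < Multiset.card (Multiset.filter (fun z => c < z) (Multiset.map b Finset.univ.val))) :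
    List.Lex (· < ·) α β := by
  classical
  have hlα : α.length = Fintype.card ι := length_eq_card a α hαm
  have hlβ : β.length = Fintype.card ι := length_eq_card b β hβm
  have hupward' : ∀ (t' : ℝ) (x y : ℝ), x ≤ y → decide (t' < x) = true → decide (t' < y) = true := by
    intro t' x y hxy hx
    simp only [decide_eq_true_eq] at *
    exact lt_of_lt_of_le hx hxy
  set qc : ℝ → Bool := fun z => decide (c < z) with hqc
  set m : ℕ := α.countP qc with hm
  set m' : ℕ := β.countP qc with hm'
  have hmm : m = Multiset.card (Multiset.filter (fun z => c < z) (Multiset.map a Finset.univ.val)) := by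
    rw [hm, hqc, list_countP_eq_multiset, hαm, Multiset.countP_eq_card_filter]
  have hmm' : m' = Multiset.card (Multiset.filter (fun z => c < z) (Multiset.map b Finset.univ.val)) := by
    rw [hm', hqc, list_countP_eq_multiset, hβm, Multiset.countP_eq_card_filter]
  have hmlt : m < m' := by rw [hmm, hmm']; exact hcard
  have hm'le : m' ≤ β.length := List.countP_le_length
  -- pointwise comparison below m'
  have claim : ∀ j (hjα : j < α.length) (hjβ : j < β.length), j < m' →
      α.get ⟨j, hjα⟩ ≤ β.get ⟨j, hjβ⟩ := by
    intro j hjα hjβ hjm'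
    by_contra hcon
    push_neg at hcon
    have hβc : c < β.get ⟨j, hjβ⟩ := by
      have h5 := pred_get_of_lt_countP qc (hupward' c) hβs (by rw [← hm']; exact hjm')
      simp only [hqc, decide_eq_true_eq] at h5
      exact h5
    have hc1 : j + 1 ≤ α.countP (fun z => decide (β.get ⟨j, hjβ⟩ < z)) :=
      countP_le_of_pred_get _ (hupward' _) hαs hjα (by simpa using hcon)
    have hc2 : α.countP (fun z => decide (β.get ⟨j, hjβ⟩ < z))
        ≤ β.countP (fun z => decide (β.get ⟨j, hjβ⟩ < z)) := by
      rw [list_countP_eq_multiset α (fun z => β.get ⟨j, hjβ⟩ < z),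
        list_countP_eq_multiset β (fun z => β.get ⟨j, hjβ⟩ < z), hαm, hβm]
      rw [← ms_countP_filter_of_imp (fun z hz => lt_trans hβc hz) (Multiset.map a Finset.univ.val),
        ← ms_countP_filter_of_imp (fun z hz => lt_trans hβc hz) (Multiset.map b Finset.univ.val)]
      exact Multiset.countP_le_of_le _ hsub
    have hc3 : β.countP (fun z => decide (β.get ⟨j, hjβ⟩ < z)) ≤ j := countP_lt_self_le hβs hjβ
    omega
  -- strict inequality at index m
  have hmα : m < α.length := by omega
  have hmβ : m < β.length := by omega
  have hstrict : α.get ⟨m, hmα⟩ < β.get ⟨m, hmβ⟩ := by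
    have hβc : c < β.get ⟨m, hmβ⟩ := by
      have h5 := pred_get_of_lt_countP qc (hupward' c) hβs (by rw [← hm']; exact hmlt)
      simp only [hqc, decide_eq_true_eq] at h5
      exact h5
    have hαc : ¬ c < α.get ⟨m, hmα⟩ := by
      intro hc
      have := countP_le_of_pred_get qc (hupward' c) hαs hmα (by simpa [hqc] using hc)
      omega
    push_neg at hαc
    exact lt_of_le_of_lt hαc hβc
  -- first differing index
  have hQ : ∃ j, ∃ (hjα : j < α.length) (hjβ : j < β.length),
      j < m' ∧ α.get ⟨j, hjα⟩ ≠ β.get ⟨j, hjβ⟩ := ⟨m, hmα, hmβ, hmlt, ne_of_lt hstrict⟩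
  set j₀ := Nat.find hQ with hj₀
  obtain ⟨hj₀α, hj₀β, hj₀m', hj₀ne⟩ := Nat.find_spec hQ
  have hlt : α.get ⟨j₀, hj₀α⟩ < β.get ⟨j₀, hj₀β⟩ :=
    lt_of_le_of_ne (claim j₀ hj₀α hj₀β hj₀m') hj₀ne
  apply lex_of_first_diff j₀ α β hj₀α hj₀β _ hlt
  intro i hi
  by_contra hne
  exact Nat.find_min hQ hi ⟨lt_trans hi hj₀α, lt_trans hi hj₀β, lt_trans hi hj₀m', hne⟩

end Compare

section Theta
variable {n : ℕ} (v : Finset (Fin n) → ℝ)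

lemma theta_sortedD (x : Fin n → ℝ) : SortedD (theta v x) := by
  rw [theta]
  exact List.pairwise_reverse.2 (Multiset.pairwise_sort _ _)

lemma theta_coe (x : Fin n → ℝ) : ((theta v x : List ℝ) : Multiset ℝ)
    = Multiset.map (fun S => excess v S x) (Finset.univ : Finset (Finset (Fin n))).val := by
  rw [theta, Multiset.coe_reverse, Multiset.sort_eq]

lemma theta_congr {x y : Fin n → ℝ} (h : ∀ S, excess v S y = excess v S x) :
    theta v y = theta v x := by
  unfold theta
  congr 1
  congr 1
  exact Multiset.map_congr rfl fun S _ => h S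

lemma lex_asymm_contra {l₁ l₂ : List ℝ} (h1 : List.Lex (· < ·) l₁ l₂)
    (h2 : List.Lex (· < ·) l₂ l₁) : False := by
  have : List.Lex (· < ·) l₁ l₁ := List.lex_trans (fun h₁ h₂ => lt_trans h₁ h₂) h1 h2
  exact irrefl_of (List.Lex (· < ·)) l₁ this

end Theta

end KohlbergAux

set_option maxHeartbeats 2000000 in
/-- Kohlberg's criterion: a pre-imputation `x` is the pre-nucleolus of `(N,v)` iff for
every `ψ ∈ ℝ` the set `D^v(ψ,x)`, whenever nonempty, is a balanced collection. -/
theorem stmt13 (n : ℕ) (hn : 0 < n) (v : Finset (Fin n) → ℝ) (hv0 : v ∅ = 0)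
    (x : Fin n → ℝ) (hx : ∑ k, x k = v Finset.univ) :
    IsPrenucleolus v x ↔
      ∀ ψ : ℝ, (Dset v ψ x).Nonempty → IsBalanced (Dset v ψ x) := by
  classical
  open KohlbergAux in
  constructor
  · -- prenucleolus implies balancedness of all level sets
    intro hpn ψ hne
    have hproper : ∀ S ∈ Dset v ψ x, S.Nonempty := fun S hS =>
      ((Finset.mem_filter.1 hS).2).1
    apply balanced_of_crit hn _ hne hproper
    intro d hd0 hdnn
    by_contra hcon
    push_neg at hcon
    obtain ⟨S₀, hS₀D, hS₀ne⟩ := hcon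
    have hS₀pos : 0 < ∑ k ∈ S₀, d k := lt_of_le_of_ne (hdnn S₀ hS₀D) (Ne.symm hS₀ne)
    have hS₀mem := Finset.mem_filter.1 hS₀D
    -- choice of a small ε
    set Bad : Finset (Finset (Fin n)) := Finset.univ.filter
      (fun S : Finset (Fin n) => S.Nonempty ∧ S ≠ Finset.univ ∧ excess v S x < ψ) with hBad
    set εf : Finset (Fin n) → ℝ := fun S => (ψ - excess v S x) / (|∑ k ∈ S, d k| + 1) with hεf
    set cand : Finset ℝ := insert (1:ℝ) (Bad.image εf) with hcand
    have hcandne : cand.Nonempty := ⟨1, Finset.mem_insert_self _ _⟩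
    set ε : ℝ := cand.min' hcandne with hε
    have hεpos : 0 < ε := by
      rw [hε, Finset.lt_min'_iff]
      intro b hb
      rcases Finset.mem_insert.1 hb with rfl | hb
      · exact one_pos
      · obtain ⟨S, hS, rfl⟩ := Finset.mem_image.1 hb
        have hSlt : excess v S x < ψ := ((Finset.mem_filter.1 hS).2).2.2
        refine div_pos (by linarith) (by positivity)
    have hkey : ∀ S ∈ Bad, excess v S x + ε * |∑ k ∈ S, d k| < ψ := by
      intro S hS
      have hle : ε ≤ εf S := Finset.min'_le _ _
        (Finset.mem_insert_of_mem (Finset.mem_image_of_mem εf hS))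
      have hSlt : excess v S x < ψ := ((Finset.mem_filter.1 hS).2).2.2
      have hεfpos : 0 < εf S := div_pos (by linarith) (by positivity)
      have h1 : ε * |∑ k ∈ S, d k| ≤ εf S * |∑ k ∈ S, d k| :=
        mul_le_mul_of_nonneg_right hle (abs_nonneg _)
      have h2 : εf S * (|∑ k ∈ S, d k| + 1) = ψ - excess v S x := by
        rw [hεf]
        field_simp
      nlinarith
    set y : Fin n → ℝ := fun k => x k + ε * d k with hy
    have hysum : ∑ k, y k = v Finset.univ := by
      rw [hy]
      rw [Finset.sum_add_distrib, ← Finset.mul_sum, hd0, mul_zero, add_zero]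
      exact hx
    have hexy : ∀ S, excess v S y = excess v S x - ε * ∑ k ∈ S, d k := by
      intro S
      rw [hy]
      simp only [excess, Finset.sum_add_distrib, ← Finset.mul_sum]
      ring
    have hlex : List.Lex (· < ·) (theta v y) (theta v x) := by
      apply lex_of_level_dominance (fun S => excess v S y) (fun S => excess v S x) ψ _ _
        (theta_sortedD v y) (theta_sortedD v x) (theta_coe v y) (theta_coe v x)
      · -- (i) domination above level ψ
        intro S hSx
        rw [hexy]
        rcases eq_or_ne S Finset.univ with rfl | hSuniv
        · rw [hd0, mul_zero, sub_zero]
        rcases S.eq_empty_or_nonempty with rfl | hSne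
        · simp
        · have hSD : S ∈ Dset v ψ x :=
            Finset.mem_filter.2 ⟨Finset.mem_univ _, hSne, hSuniv, hSx⟩
          have := hdnn S hSD
          nlinarith
      · -- (ii) no new entries above ψ
        intro S hSy
        rcases eq_or_ne S Finset.univ with rfl | hSuniv
        · rw [hexy, hd0, mul_zero, sub_zero] at hSy; exact hSy
        rcases S.eq_empty_or_nonempty with rfl | hSne
        · rw [hexy] at hSy; simpa using hSy
        by_contra hSx
        push_neg at hSx
        have hSBad : S ∈ Bad := Finset.mem_filter.2 ⟨Finset.mem_univ _, hSne, hSuniv, hSx⟩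
        have h1 := hkey S hSBad
        rw [hexy] at hSy
        have h2 : -(ε * ∑ k ∈ S, d k) ≤ ε * |∑ k ∈ S, d k| := by
          rw [← mul_neg]
          exact mul_le_mul_of_nonneg_left (neg_le_abs _) hεpos.le
        linarith
      · -- (iii) strict decrease at S₀
        refine ⟨S₀, (hS₀mem.2).2.2, ?_⟩
        rw [hexy]
        nlinarith
    rcases hpn.2 y hysum with heq | hlt
    · rw [← heq] at hlex
      exact absurd hlex (irrefl_of (List.Lex (· < ·)) _)
    · exact lex_asymm_contra hlt hlex
  · -- balancedness of all level sets implies prenucleolus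
    intro hB
    refine ⟨hx, ?_⟩
    intro y hy
    rcases trichotomous_of (List.Lex (· < ·) : List ℝ → List ℝ → Prop)
      (theta v x) (theta v y) with h | h | h
    · exact Or.inr h
    · exact Or.inl h
    exfalso
    set d : Fin n → ℝ := fun k => y k - x k with hd
    have hd0 : ∑ k, d k = 0 := by
      rw [hd, Finset.sum_sub_distrib, hy, hx, sub_self]
    have hexy : ∀ S, excess v S y = excess v S x - ∑ k ∈ S, d k := by
      intro S
      rw [hd]
      simp only [excess, Finset.sum_sub_distrib]
      ring
    set above : Finset (Fin n) → Finset (Finset (Fin n)) := fun S =>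
      Finset.univ.filter (fun S' => (S'.Nonempty ∧ S' ≠ Finset.univ) ∧
        excess v S x < excess v S' x) with habove
    have main : ∀ N : ℕ, ∀ S : Finset (Fin n), S.Nonempty → S ≠ Finset.univ →
        (above S).card ≤ N → (∑ k ∈ S, d k) = 0 := by
      intro N
      induction N using Nat.strong_induction_on with
      | _ N IH =>
      intro S hSne hSuniv hcard
      set ψ : ℝ := excess v S x with hψ
      have hSD : S ∈ Dset v ψ x :=
        Finset.mem_filter.2 ⟨Finset.mem_univ _, hSne, hSuniv, le_refl _⟩
      obtain ⟨w, hw_pos, hw_sum⟩ := hB ψ ⟨S, hSD⟩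
      have hzero_above : ∀ S' : Finset (Fin n), S'.Nonempty → S' ≠ Finset.univ →
          ψ < excess v S' x → (∑ k ∈ S', d k) = 0 := by
        intro S' hS'ne hS'univ hgt
        have hsub : above S' ⊂ above S := by
          constructor
          · intro S'' hS''
            have h1 := Finset.mem_filter.1 hS''
            exact Finset.mem_filter.2 ⟨Finset.mem_univ _, h1.2.1, lt_trans hgt h1.2.2⟩
          · intro hcontra
            have hS'in : S' ∈ above S :=
              Finset.mem_filter.2 ⟨Finset.mem_univ _, ⟨hS'ne, hS'univ⟩, hgt⟩
            have := Finset.mem_filter.1 (hcontra hS'in)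
            exact lt_irrefl _ this.2.2
        have hlt2 : (above S').card < (above S).card := Finset.card_lt_card hsub
        exact IH (above S').card (lt_of_lt_of_le hlt2 hcard) S' hS'ne hS'univ le_rfl
      -- the weighted identity
      have hwid : ∑ S' ∈ Dset v ψ x, w S' * (∑ k ∈ S', d k) = 0 := by
        have h1 : dot d (∑ S' ∈ Dset v ψ x, w S' • indicat S') = dot d (fun _ => 1) := by
          rw [hw_sum]
        rw [dot_sum, dot_ones, hd0] at h1
        rw [← h1]
        exact Finset.sum_congr rfl fun S' _ => by rw [dot_indicat]
      by_contra hSd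
      -- coalitions strictly above ψ contribute 0
      have hterm0 : ∀ S' ∈ Dset v ψ x, excess v S' x ≠ ψ → w S' * (∑ k ∈ S', d k) = 0 := by
        intro S' hS' hne'
        have hmem := Finset.mem_filter.1 hS'
        have hgt : ψ < excess v S' x := lt_of_le_of_ne hmem.2.2.2 (Ne.symm hne')
        rw [hzero_above S' hmem.2.1 hmem.2.2.1 hgt, mul_zero]
      have hweq : ∑ S' ∈ (Dset v ψ x).filter (fun S' => excess v S' x = ψ),
          w S' * (∑ k ∈ S', d k) = 0 := by
        rw [← hwid]
        apply Finset.sum_filter_of_ne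
        intro S' hS' hne'
        by_contra hc
        exact hne' (hterm0 S' hS' hc)
      -- existence of a coalition at level ψ with negative d-sum
      have hexneg : ∃ S₁ ∈ Dset v ψ x, excess v S₁ x = ψ ∧ (∑ k ∈ S₁, d k) < 0 := by
        by_contra hno
        push_neg at hno
        have hnn : ∀ S' ∈ (Dset v ψ x).filter (fun S' => excess v S' x = ψ),
            0 ≤ w S' * (∑ k ∈ S', d k) := by
          intro S' hS'
          have h1 := Finset.mem_filter.1 hS'
          have h2 := hno S' h1.1 h1.2
          exact mul_nonneg (hw_pos S' h1.1).le h2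
        have hallzero := (Finset.sum_eq_zero_iff_of_nonneg hnn).1 hweq
        have hSmem : S ∈ (Dset v ψ x).filter (fun S' => excess v S' x = ψ) :=
          Finset.mem_filter.2 ⟨hSD, rfl⟩
        have := hallzero S hSmem
        rcases mul_eq_zero.1 this with h' | h'
        · exact absurd h' (ne_of_gt (hw_pos S hSD))
        · exact hSd h'
      obtain ⟨S₁, hS₁D, hS₁eq, hS₁neg⟩ := hexneg
      -- set up the multiset comparison at level ψ
      set U : Finset (Finset (Fin n)) :=
        Finset.univ.filter (fun S' : Finset (Fin n) => ψ < excess v S' x) with hU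
      set W : Finset (Finset (Fin n)) :=
        Finset.univ.filter (fun S' : Finset (Fin n) => ψ < excess v S' y) with hW
      have hUeq : ∀ S' ∈ U, excess v S' y = excess v S' x := by
        intro S' hS'
        have hgt : ψ < excess v S' x := (Finset.mem_filter.1 hS').2
        rw [hexy]
        rcases eq_or_ne S' Finset.univ with rfl | hS'univ
        · rw [hd0, sub_zero]
        rcases S'.eq_empty_or_nonempty with rfl | hS'ne
        · simp
        · rw [hzero_above S' hS'ne hS'univ hgt, sub_zero]
      have hUW : U ⊆ W := by
        intro S' hS'
        have hgt : ψ < excess v S' x := (Finset.mem_filter.1 hS').2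
        exact Finset.mem_filter.2 ⟨Finset.mem_univ _, by rw [hUeq S' hS']; exact hgt⟩
      have hS₁W : S₁ ∈ W := by
        refine Finset.mem_filter.2 ⟨Finset.mem_univ _, ?_⟩
        rw [hexy, hS₁eq]
        linarith
      have hS₁U : S₁ ∉ U := by
        rw [hU, Finset.mem_filter]
        push_neg
        intro _
        rw [hS₁eq]
      have hUWss : U ⊂ W := Finset.ssubset_iff_of_subset hUW |>.2 ⟨S₁, hS₁W, hS₁U⟩
      have hlex2 : List.Lex (· < ·) (theta v x) (theta v y) := by
        apply lex_of_filter_lt (fun S' => excess v S' x) (fun S' => excess v S' y) ψ _ _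
          (theta_sortedD v x) (theta_sortedD v y) (theta_coe v x) (theta_coe v y)
        · -- submultiset
          rw [Multiset.filter_map, Multiset.filter_map]
          have e1 : Multiset.filter ((fun z => ψ < z) ∘ fun S' => excess v S' x)
              (Finset.univ : Finset (Finset (Fin n))).val = U.val := by
            rw [hU]
            rfl
          have e2 : Multiset.filter ((fun z => ψ < z) ∘ fun S' => excess v S' y)
              (Finset.univ : Finset (Finset (Fin n))).val = W.val := by
            rw [hW]
            rfl
          rw [e1, e2]
          calc Multiset.map (fun S' => excess v S' x) U.val
              = Multiset.map (fun S' => excess v S' y) U.val := by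
                apply Multiset.map_congr rfl
                intro S' hS'
                exact (hUeq S' hS').symm
            _ ≤ Multiset.map (fun S' => excess v S' y) W.val :=
                Multiset.map_le_map (Finset.val_le_iff.2 hUW)
        · -- strict cardinality
          rw [Multiset.filter_map, Multiset.filter_map]
          have e1 : Multiset.filter ((fun z => ψ < z) ∘ fun S' => excess v S' x)
              (Finset.univ : Finset (Finset (Fin n))).val = U.val := by
            rw [hU]; rfl
          have e2 : Multiset.filter ((fun z => ψ < z) ∘ fun S' => excess v S' y)
              (Finset.univ : Finset (Finset (Fin n))).val = W.val := by
            rw [hW]; rfl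
          rw [e1, e2]
          simpa using Finset.card_lt_card hUWss
      exact lex_asymm_contra h hlex2
    -- every proper coalition has zero d-sum, so the thetas agree
    have hall : ∀ S', excess v S' y = excess v S' x := by
      intro S'
      rw [hexy]
      rcases eq_or_ne S' Finset.univ with rfl | hS'univ
      · rw [hd0, sub_zero]
      rcases S'.eq_empty_or_nonempty with rfl | hS'ne
      · simp
      · rw [main (above S').card S' hS'ne hS'univ le_rfl, sub_zero]
    have := theta_congr v hall
    rw [this] at h
    exact irrefl_of (List.Lex (· < ·)) _ h
end
end

section
/- Let σ: X ⇉ Y be a correspondence from a nonempty convex polyhedral subset X of R^p to subsets of R^n. If σ is bounded and its graph Gr(σ) = {(x,y) : y ∈ σ(x)} is convex, then σ is lower hemicontinuous: for every x ∈ X and every open set O ⊆ R^n with σ(x) ∩ O ≠ ∅, there is a neighborhood Q of x in X such that σ(x') ∩ O ≠ ∅ for all x' ∈ Q. -/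
private lemma exists_pos_le_finset {ι : Type*} (s : Finset ι) (g : ι → ℝ)
    (h : ∀ i ∈ s, 0 < g i) : ∃ δ : ℝ, 0 < δ ∧ ∀ i ∈ s, δ ≤ g i := by
  classical
  induction s using Finset.induction_on with
  | empty => exact ⟨1, one_pos, by simp⟩
  | insert _ _ ha ih =>
    obtain ⟨δ, hδ, hle⟩ := ih (fun i hi => h i (Finset.mem_insert_of_mem hi))
    refine ⟨min δ (g _), lt_min hδ (h _ (Finset.mem_insert_self _ _)), ?_⟩
    intro i hi
    rcases Finset.mem_insert.mp hi with rfl | hi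
    · exact min_le_right _ _
    · exact le_trans (min_le_left _ _) (hle i hi)

/-- A bounded correspondence with convex graph on a nonempty convex polyhedral subset of
`ℝ^p` is lower hemicontinuous. -/
theorem stmt15 (p n : ℕ) (X : Set (Fin p → ℝ)) (hXne : X.Nonempty) (hXconv : Convex ℝ X)
    (hXpoly : ∃ (k : ℕ) (a : Fin k → ((Fin p → ℝ) →ₗ[ℝ] ℝ)) (b : Fin k → ℝ),
      X = {x | ∀ i, a i x ≤ b i})
    (σ : (Fin p → ℝ) → Set (Fin n → ℝ))
    (hne : ∀ x ∈ X, (σ x).Nonempty)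
    (hbdd : ∀ B : Set (Fin p → ℝ), Bornology.IsBounded B →
      Bornology.IsBounded (⋃ x ∈ B ∩ X, σ x))
    (hconv : Convex ℝ {pp : (Fin p → ℝ) × (Fin n → ℝ) | pp.1 ∈ X ∧ pp.2 ∈ σ pp.1}) :
    ∀ x ∈ X, ∀ O : Set (Fin n → ℝ), IsOpen O → (σ x ∩ O).Nonempty →
      ∃ Q : Set (Fin p → ℝ), IsOpen Q ∧ x ∈ Q ∧ ∀ x' ∈ Q ∩ X, (σ x' ∩ O).Nonempty := by
  classical
  obtain ⟨k, a, b, hX⟩ := hXpoly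
  rintro x hx O hO ⟨y, hyσ, hyO⟩
  -- operator norm bounds for the linear functionals
  set C : Fin k → ℝ := fun i => ‖LinearMap.toContinuousLinearMap (a i)‖ with hC
  have hCbound : ∀ i (v : Fin p → ℝ), |a i v| ≤ C i * ‖v‖ := by
    intro i v
    have := (LinearMap.toContinuousLinearMap (a i)).le_opNorm v
    simpa [Real.norm_eq_abs] using this
  have hCnonneg : ∀ i, 0 ≤ C i := fun i => norm_nonneg _
  have hxX : ∀ i, a i x ≤ b i := by rw [hX] at hx; exact hx
  -- choose δ
  set g : Fin k → ℝ := fun i =>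
    if a i x < b i then (b i - a i x) / (C i + 1) else 1 with hg
  have hgpos : ∀ i ∈ (Finset.univ : Finset (Fin k)), 0 < g i := by
    intro i _
    by_cases h : a i x < b i
    · simp only [hg, if_pos h]
      exact div_pos (by linarith) (by have := hCnonneg i; linarith)
    · simp [hg, if_neg h]
  obtain ⟨δ, hδpos, hδle⟩ := exists_pos_le_finset Finset.univ g hgpos
  have hδkey : ∀ i, a i x < b i → δ * (C i + 1) ≤ b i - a i x := by
    intro i hi
    have := hδle i (Finset.mem_univ i)
    rw [hg] at this; simp only [if_pos hi] at this
    have hc : (0:ℝ) < C i + 1 := by have := hCnonneg i; linarith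
    calc δ * (C i + 1) ≤ ((b i - a i x) / (C i + 1)) * (C i + 1) := by
          exact mul_le_mul_of_nonneg_right this hc.le
      _ = b i - a i x := div_mul_cancel₀ _ hc.ne'
  -- bound on σ over the closed ball of radius δ
  obtain ⟨M, hM⟩ := isBounded_iff_forall_norm_le.mp
    (hbdd (Metric.closedBall x δ) Metric.isBounded_closedBall)
  set M' : ℝ := max M 0 with hM'
  have hM'bound : ∀ w ∈ ⋃ z ∈ Metric.closedBall x δ ∩ X, σ z, ‖w‖ ≤ M' := by
    intro w hw; exact (hM w hw).trans (le_max_left _ _)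
  set K : ℝ := M' + ‖y‖ + 1 with hK
  have hKpos : 0 < K := by
    have h1 : (0:ℝ) ≤ M' := le_max_right _ _
    have h2 : (0:ℝ) ≤ ‖y‖ := norm_nonneg _
    simp only [hK]; linarith
  -- ε from openness
  obtain ⟨ε, hεpos, hεsub⟩ := Metric.isOpen_iff.mp hO y hyO
  set r : ℝ := min δ (δ * ε / K) with hr
  have hrpos : 0 < r := lt_min hδpos (div_pos (mul_pos hδpos hεpos) hKpos)
  refine ⟨Metric.ball x r, Metric.isOpen_ball, Metric.mem_ball_self hrpos, ?_⟩
  rintro x' ⟨hx'ball, hx'X⟩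
  by_cases hxx : x' = x
  · exact ⟨y, by rw [hxx]; exact hyσ, hyO⟩
  -- main case
  set d : ℝ := ‖x' - x‖ with hd
  have hdpos : 0 < d := norm_pos_iff.mpr (sub_ne_zero.mpr hxx)
  have hdr : d < r := by
    have := Metric.mem_ball.mp hx'ball
    rwa [dist_eq_norm] at this
  have hdδ : d < δ := lt_of_lt_of_le hdr (min_le_left _ _)
  have hx'ineq : ∀ i, a i x' ≤ b i := by rw [hX] at hx'X; exact hx'X
  set z : Fin p → ℝ := x + (δ / d) • (x' - x) with hz
  have hsd : (δ / d) * d = δ := div_mul_cancel₀ _ hdpos.ne'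
  have hspos : 0 < δ / d := div_pos hδpos hdpos
  have hzX : z ∈ X := by
    rw [hX]
    intro i
    have hlin : a i z = a i x + (δ / d) * a i (x' - x) := by
      simp [hz, map_add, map_smul, smul_eq_mul]
    rw [hlin]
    by_cases hcase : a i x < b i
    · have h1 : a i (x' - x) ≤ C i * d := by
        have := hCbound i (x' - x)
        have := le_abs_self (a i (x' - x))
        linarith [hCbound i (x' - x), le_abs_self (a i (x' - x))]
      have h2 : (δ / d) * a i (x' - x) ≤ (δ / d) * (C i * d) :=
        mul_le_mul_of_nonneg_left h1 hspos.le
      have h3 : (δ / d) * (C i * d) = δ * C i := by field_simp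
      have h4 : δ * C i ≤ δ * (C i + 1) := by nlinarith [hδpos]
      have h5 := hδkey i hcase
      linarith
    · have heq : a i x = b i := le_antisymm (hxX i) (not_lt.mp hcase)
      have h1 : a i (x' - x) ≤ 0 := by
        have := hx'ineq i
        simp only [map_sub]
        linarith
      have h2 : (δ / d) * a i (x' - x) ≤ 0 :=
        mul_nonpos_of_nonneg_of_nonpos hspos.le h1
      linarith
  have hzball : z ∈ Metric.closedBall x δ := by
    rw [Metric.mem_closedBall, dist_eq_norm]
    have : z - x = (δ / d) • (x' - x) := by simp [hz]
    rw [this, norm_smul, Real.norm_of_nonneg hspos.le, ← hd, hsd]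
  obtain ⟨w, hw⟩ := hne z hzX
  have hwM : ‖w‖ ≤ M' := hM'bound w (Set.mem_biUnion ⟨hzball, hzX⟩ hw)
  -- convex combination
  set μ : ℝ := d / δ with hμ
  have hμpos : 0 < μ := div_pos hdpos hδpos
  have hμlt : μ < 1 := (div_lt_one hδpos).mpr hdδ
  set lam : ℝ := 1 - μ with hlam
  have hlampos : 0 < lam := by simp only [hlam]; linarith
  have hcomb := hconv (x := (x, y)) (y := (z, w)) ⟨hx, hyσ⟩ ⟨hzX, hw⟩
    hlampos.le hμpos.le (by simp [hlam])
  have hfirst : lam • x + μ • z = x' := by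
    have h1 : μ * (δ / d) = 1 := by
      field_simp [hμ]
      rw [hμ, div_mul_cancel₀ _ hδpos.ne']
    rw [hz, smul_add, smul_smul, h1, one_smul, ← add_assoc, ← add_smul]
    have : lam + μ = 1 := by simp [hlam]
    rw [this, one_smul]
    abel
  have hmem : lam • y + μ • w ∈ σ x' := by
    have : (lam • (x, y) + μ • (z, w) : (Fin p → ℝ) × (Fin n → ℝ)) =
        (lam • x + μ • z, lam • y + μ • w) := rfl
    rw [this] at hcomb
    rw [hfirst] at hcomb
    exact hcomb.2
  refine ⟨lam • y + μ • w, hmem, hεsub ?_⟩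
  rw [Metric.mem_ball, dist_eq_norm]
  have hdiff : lam • y + μ • w - y = μ • (w - y) := by
    rw [hlam]
    module
  rw [hdiff, norm_smul, Real.norm_of_nonneg hμpos.le]
  have hwy : ‖w - y‖ ≤ M' + ‖y‖ := (norm_sub_le _ _).trans (by linarith [hwM])
  have hμε : μ * K < ε := by
    have hd2 : d < δ * ε / K := lt_of_lt_of_le hdr (min_le_right _ _)
    have : μ < ε / K := by
      rw [hμ, div_lt_div_iff₀ hδpos hKpos]
      calc d * K < (δ * ε / K) * K := by
            exact mul_lt_mul_of_pos_right hd2 hKpos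
        _ = ε * δ := by field_simp
    calc μ * K < (ε / K) * K := mul_lt_mul_of_pos_right this hKpos
      _ = ε := div_mul_cancel₀ _ hKpos.ne'
  calc μ * ‖w - y‖ ≤ μ * (M' + ‖y‖) := mul_le_mul_of_nonneg_left hwy hμpos.le
    _ ≤ μ * K := by
        have : M' + ‖y‖ ≤ K := by simp only [hK]; linarith
        exact mul_le_mul_of_nonneg_left this hμpos.le
    _ < ε := hμε
end
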